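/- arXiv:1206.4707 — 2 statements merged into one kernel-verified Lean document; each statement's English description precedes it below -/
import Mathlib

section
/- Let S be a surface (a connected Hausdorff topological 2-manifold), f : S → S a homeomorphism, and U ⊆ S an open simply connected f-invariant set with S∖U having more than one point. Suppose there is a compact set K ⊆ U such that U∖K does not contain the forward or backward orbit of any f-wandering open set; that is, there is no nonempty open set W with f^k(W) ∩ W = ∅ for all integers k ≠ 0 such that f^k(W) ⊆ U∖K for all k ≥ 0, and no such W with f^k(W) ⊆ U∖K for all k ≤ 0. Then f is ∂-nonwandering in U. In particular, this holds if there is a compact K ⊆ U such that U∖K is contained in the nonwandering set of f. -/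
open Set Topology Filter

noncomputable section

universe u

variable {X : Type u} [TopologicalSpace X]

/-- A homeomorphism is *orientation preserving* if it is isotopic to the identity. -/
def IsOrientationPreserving (f : X ≃ₜ X) : Prop :=
  ∃ H : unitInterval × X → X,
    Continuous H ∧ (∀ x, H (0, x) = x) ∧ (∀ x, H (1, x) = f x) ∧
      ∀ t : unitInterval, IsHomeomorph fun x => H (t, x)

/-- `D` is a connected component of `A`. -/
def IsCompOf (A D : Set X) : Prop := ∃ x ∈ A, D = connectedComponentIn A x

/-- `A` has exactly two connected components, the distinct sets `D₁` and `D₂`. -/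
def HasTwoComps (A D₁ D₂ : Set X) : Prop :=
  IsCompOf A D₁ ∧ IsCompOf A D₂ ∧ D₁ ≠ D₂ ∧
    ∀ x ∈ A, connectedComponentIn A x = D₁ ∨ connectedComponentIn A x = D₂

/-- A *cross-cut* of the open set `U`: the image of an arc `g` on `(0,1)`, where `g` is
continuous and injective on `[0,1]`'s interior, runs inside `U`, has endpoints on `∂U`, and
separates `U` into exactly two components, each with a boundary point on `∂U` away from the
closed arc. -/
def IsCrossCut (U γ : Set X) : Prop :=
  ∃ g : ℝ → X,
    ContinuousOn g (Icc 0 1) ∧ InjOn g (Ioo 0 1) ∧ (∀ t ∈ Ioo (0:ℝ) 1, g t ∈ U) ∧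
      g 0 ∈ frontier U ∧ g 1 ∈ frontier U ∧ γ = g '' Ioo 0 1 ∧
      ∃ D₁ D₂ : Set X, HasTwoComps (U \ γ) D₁ D₂ ∧
        (frontier D₁ ∩ (frontier U \ g '' Icc 0 1)).Nonempty ∧
        (frontier D₂ ∩ (frontier U \ g '' Icc 0 1)).Nonempty

/-- A *cross-section* of `U`: a connected component of `U ∖ γ` for a cross-cut `γ`. -/
def IsCrossSection (U D : Set X) : Prop := ∃ γ : Set X, IsCrossCut U γ ∧ IsCompOf (U \ γ) D

/-- The image of a set under the `k`-th integer iterate of a homeomorphism. -/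
def iterZ (f : X ≃ₜ X) (k : ℤ) (A : Set X) : Set X := ⇑(f.toEquiv ^ k) '' A

/-- A cross-section of `U` which is wandering for `f^n`. -/
def IsWanderingSection (f : X ≃ₜ X) (U : Set X) (n : ℕ) (D : Set X) : Prop :=
  IsCrossSection U D ∧ ∀ k : ℤ, k ≠ 0 → iterZ f ((n : ℤ) * k) D ∩ D = ∅

/-- `f` is ∂-nonwandering in `U`. -/
def BdNonwandering (f : X ≃ₜ X) (U : Set X) : Prop :=
  ∀ n : ℕ, 1 ≤ n → ∃ K : Set X, IsCompact K ∧ K ⊆ U ∧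
    ∀ D : Set X, IsWanderingSection f U n D →
      (∃ k : ℤ, 0 < k ∧ (iterZ f ((n : ℤ) * k) D ∩ K).Nonempty) ∧
      (∃ k : ℤ, k < 0 ∧ (iterZ f ((n : ℤ) * k) D ∩ K).Nonempty)

/-- The boundary of `D` inside `U` (for `D` open in `U`). -/
def bdIn (U D : Set X) : Set X := (closure D \ D) ∩ U

/-- A chain of cross-sections of `U`. -/
def IsPEChain (U : Set X) (D : ℕ → Set X) : Prop :=
  (∀ i, IsCrossSection U (D i)) ∧ (∀ i j : ℕ, j ≤ i → D i ⊆ D j) ∧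
    ∀ i j : ℕ, i ≠ j → closure (bdIn U (D i)) ∩ closure (bdIn U (D j)) = ∅

/-- The chain `D` divides the cross-section `E`. -/
def ChainDividesSection (D : ℕ → Set X) (E : Set X) : Prop := ∃ N : ℕ, ∀ i, N ≤ i → D i ⊆ E

/-- The chain `D` divides the chain `D'`. -/
def ChainDivides (D D' : ℕ → Set X) : Prop := ∀ n : ℕ, ∃ m : ℕ, D m ⊆ D' n

/-- A prime chain: a chain dividing every chain that divides it. -/
def IsPrimeChain (U : Set X) (D : ℕ → Set X) : Prop :=
  IsPEChain U D ∧ ∀ D' : ℕ → Set X, IsPEChain U D' → ChainDivides D' D → ChainDivides D D'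

/-- The type of prime chains of `U`. -/
def PrimeChain (U : Set X) : Type u := {D : ℕ → Set X // IsPrimeChain U D}

/-- A prime end of `U`: an equivalence class of prime chains. -/
def PrimeEnd (U : Set X) : Type u :=
  Quot fun C C' : PrimeChain U => ChainDivides C.1 C'.1 ∧ ChainDivides C'.1 C.1

/-- The prime end `p` divides the cross-section `E`. -/
def PrimeEndDivides {U : Set X} (p : PrimeEnd U) (E : Set X) : Prop :=
  ∃ C : PrimeChain U, Quot.mk _ C = p ∧ ChainDividesSection C.1 E

/-- The prime ends compactification of `U` (as a set: `U ⊔ (prime ends)`). -/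
def PrimeEndComp (U : Set X) : Type u := ↥U ⊕ PrimeEnd U

/-- A point of `U`, as an element of the prime ends compactification. -/
def pePt (U : Set X) (x : ↥U) : PrimeEndComp U := Sum.inl x

/-- A prime end, as an element of the prime ends compactification. -/
def peEnd (U : Set X) (p : PrimeEnd U) : PrimeEndComp U := Sum.inr p

/-- The copy of a subset `V ⊆ U` inside the prime ends compactification. -/
def peOpen (U V : Set X) : Set (PrimeEndComp U) := {z | ∃ x : ↥U, z = pePt U x ∧ (x : X) ∈ V}

/-- The basic set `E ∪ i_E(E)` of the prime ends compactification, for a cross-section `E`. -/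
def peSection (U E : Set X) : Set (PrimeEndComp U) :=
  peOpen U E ∪ {z | ∃ p : PrimeEnd U, z = peEnd U p ∧ PrimeEndDivides p E}

/-- The topology of the prime ends compactification. -/
instance primeEndCompTopology (U : Set X) : TopologicalSpace (PrimeEndComp U) :=
  TopologicalSpace.generateFrom
    ({s | ∃ V : Set X, IsOpen V ∧ V ⊆ U ∧ s = peOpen U V} ∪
      {s | ∃ E : Set X, IsCrossSection U E ∧ s = peSection U E})

/-- The circle of prime ends, as a subset of the prime ends compactification. -/
def PrimeEndCircle (U : Set X) : Set (PrimeEndComp U) := Set.range (peEnd U)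

/-- `F` is an extension of `f|_U` to the prime ends compactification of `U`. -/
def IsPEExtension (f : X ≃ₜ X) (U : Set X) (F : PrimeEndComp U ≃ₜ PrimeEndComp U) : Prop :=
  ∀ (x : X) (hx : x ∈ U) (hfx : f x ∈ U), F (pePt U ⟨x, hx⟩) = pePt U ⟨f x, hfx⟩

/-- An end-cut of `U`: an injective arc in `U` defined on `[0,1)` converging in the ambient
space as `t → 1⁻`. -/
def IsEndCut (U : Set X) (γ : ℝ → X) : Prop :=
  ContinuousOn γ (Ico 0 1) ∧ InjOn γ (Ico 0 1) ∧ (∀ t ∈ Ico (0:ℝ) 1, γ t ∈ U) ∧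
    ∃ z : X, Tendsto γ (𝓝[<] (1:ℝ)) (𝓝 z)

/-- `z` is an accessible point of `∂U`. -/
def IsAccessiblePoint (U : Set X) (z : X) : Prop :=
  ∃ γ : ℝ → X, IsEndCut U γ ∧ Tendsto γ (𝓝[<] (1:ℝ)) (𝓝 z)

/-- `p` is an accessible prime end of `U`. -/
def IsAccessiblePrimeEnd (U : Set X) (p : PrimeEnd U) : Prop :=
  ∃ (γ : ℝ → X) (hγ : ∀ t ∈ Ico (0:ℝ) 1, γ t ∈ U), IsEndCut U γ ∧
    Tendsto (fun t : ↥(Ico (0:ℝ) 1) => pePt U ⟨γ ↑t, hγ ↑t t.2⟩)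
      (comap Subtype.val (𝓝[<] (1:ℝ))) (𝓝 (peEnd U p))

/-- A translation arc for `f` based at `x`: a simple arc from `x` to `f x` meeting its image
only as allowed. -/
def IsTranslationArc (f : X ≃ₜ X) (γ : Set X) (x : X) : Prop :=
  f x ≠ x ∧
    ∃ g : ℝ → X, ContinuousOn g (Icc 0 1) ∧ InjOn g (Icc 0 1) ∧
      g 0 = x ∧ g 1 = f x ∧ γ = g '' Icc 0 1 ∧
      ((⇑f '' γ) ∩ γ = {f x} ∨ ((⇑f '' γ) ∩ γ = {x, f x} ∧ f (f x) = x))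

/-- An `N`-translation arc for `f` based at `x` (for `N = 1` this is just a translation arc). -/
def IsNTranslationArc (f : X ≃ₜ X) (N : ℕ) (γ : Set X) (x : X) : Prop :=
  IsTranslationArc f γ x ∧
    (2 ≤ N →
      (∀ k : ℕ, 2 ≤ k → k ≤ N - 1 → (⇑f)^[k] '' γ ∩ γ = ∅) ∧
        ((⇑f)^[N] '' γ ∩ γ = ∅ ∨ ((⇑f)^[N] '' γ ∩ γ = {x} ∧ (⇑f)^[N + 1] x = x)))

/-- An ∞-translation arc: an `N`-translation arc for every `N ≥ 1`. -/
def IsInfTranslationArc (f : X ≃ₜ X) (γ : Set X) (x : X) : Prop :=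
  ∀ N : ℕ, 1 ≤ N → IsNTranslationArc f N γ x

/-- A nonwandering homeomorphism. -/
def IsNonwanderingMap (f : X → X) : Prop :=
  ∀ V : Set X, IsOpen V → V.Nonempty → ∃ n : ℕ, 1 ≤ n ∧ (f^[n] '' V ∩ V).Nonempty

/-- A loop contained in `A` which is not null-homotopic in `V`. -/
def IsEssentialLoopIn (V A : Set X) : Prop :=
  ∃ (z : ↥V) (δ : Path z z), (∀ t : unitInterval, (↑(δ t) : X) ∈ A) ∧
    ¬ δ.Homotopic (Path.refl z)

/-- An annular continuum: a continuum with an open annular neighborhood `V` such that `V ∖ K`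
has exactly two components, each essential in `V`. -/
def IsAnnularContinuum (K : Set X) : Prop :=
  IsCompact K ∧ IsConnected K ∧ K.Nontrivial ∧
    ∃ V : Set X, IsOpen V ∧ K ⊆ V ∧
      Nonempty (↥V ≃ₜ AddCircle (1 : ℝ) × ↥(Ioo (0 : ℝ) 1)) ∧
      ∃ D₁ D₂ : Set X, HasTwoComps (V \ K) D₁ D₂ ∧
        IsEssentialLoopIn V D₁ ∧ IsEssentialLoopIn V D₂

/-- A set contractible in the ambient surface: it has an open neighborhood homeomorphic to the
plane. -/
def ContractibleInSurface (K : Set X) : Prop :=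
  ∃ W : Set X, IsOpen W ∧ K ⊆ W ∧ Nonempty (↥W ≃ₜ (ℝ × ℝ))

/-- `α ∈ ℝ/ℤ` is rational. -/
def IsRationalAC (α : AddCircle (1 : ℝ)) : Prop := ∃ r : ℚ, α = ((r : ℝ) : AddCircle (1 : ℝ))

/-- The constant `q(α,g)`: the smallest positive integer `q` with `‖qα‖ = 0` if `α` is
rational, and `(2g+1)‖qα‖ < ‖α‖` if `α` is irrational. -/
def qConst (α : AddCircle (1 : ℝ)) (g : ℕ) : ℕ :=
  sInf {q : ℕ | 0 < q ∧
    ((IsRationalAC α ∧ ‖q • α‖ = 0) ∨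
      (¬IsRationalAC α ∧ ((2 * g + 1 : ℕ) : ℝ) * ‖q • α‖ < ‖α‖))}


section Aux

lemma iterZ_add (f : X ≃ₜ X) (a b : ℤ) (A : Set X) :
    iterZ f a (iterZ f b A) = iterZ f (a + b) A := by
  unfold iterZ; rw [Set.image_image, zpow_add]; rfl

lemma iterZ_zero (f : X ≃ₜ X) (A : Set X) : iterZ f 0 A = A := by
  unfold iterZ; simp

lemma iterZ_mono (f : X ≃ₜ X) (k : ℤ) {A B : Set X} (h : A ⊆ B) :
    iterZ f k A ⊆ iterZ f k B := Set.image_mono h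

lemma iterZ_inter (f : X ≃ₜ X) (c : ℤ) (A B : Set X) :
    iterZ f c (A ∩ B) = iterZ f c A ∩ iterZ f c B :=
  Set.image_inter (Equiv.injective _)

lemma iterZ_empty (f : X ≃ₜ X) (c : ℤ) : iterZ f c (∅ : Set X) = ∅ := Set.image_empty _

lemma iterZ_nonempty (f : X ≃ₜ X) (c : ℤ) {A : Set X} (h : A.Nonempty) :
    (iterZ f c A).Nonempty := h.image _

lemma aux_homeo (f : X ≃ₜ X) (k : ℤ) : ∃ g : X ≃ₜ X, ⇑(f.toEquiv ^ k) = ⇑g := by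
  induction k using Int.induction_on with
  | zero => exact ⟨Homeomorph.refl X, by funext x; simp⟩
  | succ i ih =>
    obtain ⟨g, hg⟩ := ih
    refine ⟨f.trans g, ?_⟩
    funext x
    rw [zpow_add_one, Equiv.Perm.mul_apply]
    simpa using congrFun hg (f x)
  | pred i ih =>
    obtain ⟨g, hg⟩ := ih
    refine ⟨f.symm.trans g, ?_⟩
    funext x
    rw [zpow_sub_one, Equiv.Perm.mul_apply]
    have : (f.toEquiv⁻¹ : Equiv.Perm X) x = f.symm x := rfl
    rw [this]
    simpa using congrFun hg (f.symm x)

lemma iterZ_isOpen (f : X ≃ₜ X) (k : ℤ) {A : Set X} (hA : IsOpen A) :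
    IsOpen (iterZ f k A) := by
  obtain ⟨g, hg⟩ := aux_homeo f k
  unfold iterZ; rw [hg]
  exact (Homeomorph.isOpen_image g).mpr hA

lemma iterZ_isCompact (f : X ≃ₜ X) (k : ℤ) {A : Set X} (hA : IsCompact A) :
    IsCompact (iterZ f k A) := by
  obtain ⟨g, hg⟩ := aux_homeo f k
  unfold iterZ; rw [hg]
  exact hA.image g.continuous

lemma aux_inv (f : X ≃ₜ X) (U : Set X) (h : ⇑f '' U = U) : ∀ k : ℤ, iterZ f k U = U := by
  have h1 : iterZ f 1 U = U := by unfold iterZ; rw [zpow_one]; exact h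
  have hm1 : iterZ f (-1) U = U := by
    have h2 := congrArg (iterZ f (-1)) h1
    rw [iterZ_add] at h2
    norm_num at h2
    rw [iterZ_zero] at h2
    exact h2.symm
  intro k
  induction k using Int.induction_on with
  | zero => exact iterZ_zero f U
  | succ i ih => rw [add_comm, ← iterZ_add, ih, h1]
  | pred i ih => rw [show (-(i:ℤ) - 1) = -1 + -(i:ℤ) by ring, ← iterZ_add, ih, hm1]

lemma aux_shift (f : X ≃ₜ X) (c a : ℤ) (A B : Set X) (h : (iterZ f a A ∩ B).Nonempty) :
    (iterZ f (c + a) A ∩ iterZ f c B).Nonempty := by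
  have h2 : (iterZ f c (iterZ f a A ∩ B)).Nonempty := h.image _
  rwa [iterZ_inter, iterZ_add] at h2

lemma aux_unshift (f : X ≃ₜ X) (a b : ℤ) (A B : Set X)
    (h : (iterZ f a A ∩ iterZ f b B).Nonempty) : (iterZ f (a - b) A ∩ B).Nonempty := by
  have h2 : (iterZ f (-b) (iterZ f a A ∩ iterZ f b B)).Nonempty := h.image _
  rw [iterZ_inter, iterZ_add, iterZ_add, show -b + a = a - b by ring,
    show -b + b = 0 by ring, iterZ_zero] at h2
  exact h2

end Aux

section Comb

lemma aux_refine (f : X ≃ₜ X) (n : ℕ) (hn : 1 ≤ n) (E : Set X)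
    (hE : ∀ k : ℤ, k ≠ 0 → iterZ f ((n : ℤ) * k) E ∩ E = ∅)
    (W : Set X) (hWo : IsOpen W) (hWE : W ⊆ E) (k : ℤ) (hk : k ≠ 0)
    (hne : (iterZ f k W ∩ W).Nonempty) :
    ∃ W', IsOpen W' ∧ W'.Nonempty ∧ W' ⊆ W ∩ iterZ f k W ∧ iterZ f k W' ∩ W' = ∅ := by
  by_contra hcon
  push_neg at hcon
  set V : ℕ → Set X := fun j =>
    Nat.rec (W ∩ iterZ f k W) (fun _ Vj => Vj ∩ iterZ f k Vj) j with hV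
  have hV0 : V 0 = W ∩ iterZ f k W := rfl
  have hVs : ∀ j, V (j + 1) = V j ∩ iterZ f k (V j) := fun j => rfl
  have hopen : ∀ j, IsOpen (V j) := by
    intro j
    induction j with
    | zero => exact hWo.inter (iterZ_isOpen f k hWo)
    | succ j ih => rw [hVs]; exact ih.inter (iterZ_isOpen f k ih)
  have hsubW : ∀ j, V j ⊆ W := by
    intro j
    induction j with
    | zero => exact Set.inter_subset_left
    | succ j ih => rw [hVs]; exact Set.inter_subset_left.trans ih
  have hsub0 : ∀ j, V j ⊆ V 0 := by
    intro j
    induction j with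
    | zero => exact subset_rfl
    | succ j ih => rw [hVs]; exact Set.inter_subset_left.trans ih
  have hiter : ∀ j : ℕ, V j ⊆ iterZ f (((j : ℤ) + 1) * k) W := by
    intro j
    induction j with
    | zero => simpa using (hV0 ▸ Set.inter_subset_right)
    | succ j ih =>
      have h1 : V (j + 1) ⊆ iterZ f k (V j) := hVs j ▸ Set.inter_subset_right
      have h2 : iterZ f k (V j) ⊆ iterZ f k (iterZ f (((j : ℤ) + 1) * k) W) :=
        iterZ_mono f k ih
      rw [iterZ_add] at h2
      have e : k + ((j : ℤ) + 1) * k = ((((j : ℕ) + 1 : ℕ) : ℤ) + 1) * k := by push_cast; ring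
      rw [e] at h2
      exact h1.trans h2
  have hne' : ∀ j, (V j).Nonempty := by
    intro j
    induction j with
    | zero => rw [hV0, Set.inter_comm]; exact hne
    | succ j ih =>
      have h1 := hcon (V j) (hopen j) ih (hsub0 j)
      rw [hVs, Set.inter_comm]; exact h1
  have hNN : V (n - 1) ⊆ iterZ f ((n : ℤ) * k) E ∩ E := by
    have h1 : V (n - 1) ⊆ iterZ f ((((n - 1 : ℕ) : ℤ) + 1) * k) W := hiter (n - 1)
    have e : (((n - 1 : ℕ) : ℤ) + 1) * k = (n : ℤ) * k := by
      have h2 : ((n - 1 : ℕ) : ℤ) = (n : ℤ) - 1 := by omega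
      rw [h2]; ring
    rw [e] at h1
    exact Set.subset_inter (h1.trans (iterZ_mono f _ hWE)) ((hsubW (n - 1)).trans hWE)
  rw [hE k hk] at hNN
  exact absurd (Set.subset_empty_iff.mp hNN) (Set.nonempty_iff_ne_empty.mp (hne' (n - 1)))

lemma aux_stage (f : X ≃ₜ X) (n : ℕ) (hn : 1 ≤ n) (E : Set X)
    (hE : ∀ k : ℤ, k ≠ 0 → iterZ f ((n : ℤ) * k) E ∩ E = ∅)
    (W : Set X) (hWo : IsOpen W) (hWne : W.Nonempty) (hWE : W ⊆ E) (r : ℤ) :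
    ∃ W', IsOpen W' ∧ W'.Nonempty ∧ W' ⊆ W ∧
      ∀ k : ℤ, k ≠ 0 → k % (n : ℤ) = r → iterZ f k W' ∩ W' = ∅ := by
  by_cases hall : ∀ k : ℤ, k ≠ 0 → k % (n : ℤ) = r → iterZ f k W ∩ W = ∅
  · exact ⟨W, hWo, hWne, subset_rfl, hall⟩
  push_neg at hall
  obtain ⟨k₀, hk₀, hr₀, hne₀⟩ := hall
  obtain ⟨W', hW'o, hW'ne, hW'sub, hW'k⟩ := aux_refine f n hn E hE W hWo hWE k₀ hk₀ hne₀
  refine ⟨W', hW'o, hW'ne, hW'sub.trans Set.inter_subset_left, ?_⟩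
  intro k hk hkr
  by_contra hcne
  replace hcne : (iterZ f k W' ∩ W').Nonempty := Set.nonempty_iff_ne_empty.mpr hcne
  have h1 : (iterZ f k W ∩ iterZ f k₀ W).Nonempty :=
    hcne.mono (Set.inter_subset_inter
      (iterZ_mono f k (hW'sub.trans Set.inter_subset_left))
      (hW'sub.trans Set.inter_subset_right))
  have h2 : (iterZ f (k - k₀) W ∩ W).Nonempty := aux_unshift f k k₀ W W h1
  have hd : (k - k₀) % (n : ℤ) = 0 := by
    rw [Int.sub_emod, hkr, hr₀, sub_self, Int.zero_emod]
  obtain ⟨m, hm⟩ := Int.dvd_of_emod_eq_zero hd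
  rcases eq_or_ne m 0 with h | h
  · have hkk : k = k₀ := by rw [h, mul_zero] at hm; omega
    rw [hkk, hW'k] at hcne
    exact Set.not_nonempty_empty hcne
  · rw [hm] at h2
    have h3 := h2.mono (Set.inter_subset_inter (iterZ_mono f _ hWE) hWE)
    rw [hE m h] at h3
    exact Set.not_nonempty_empty h3

lemma aux_main (f : X ≃ₜ X) (n : ℕ) (hn : 1 ≤ n) (E : Set X)
    (hEo : IsOpen E) (hEne : E.Nonempty)
    (hE : ∀ k : ℤ, k ≠ 0 → iterZ f ((n : ℤ) * k) E ∩ E = ∅) :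
    ∃ W, IsOpen W ∧ W.Nonempty ∧ W ⊆ E ∧ ∀ k : ℤ, k ≠ 0 → iterZ f k W ∩ W = ∅ := by
  have key : ∀ m : ℕ, ∃ W, IsOpen W ∧ W.Nonempty ∧ W ⊆ E ∧
      ∀ r : ℤ, 0 ≤ r → r < (m : ℤ) → ∀ k : ℤ, k ≠ 0 → k % (n : ℤ) = r →
        iterZ f k W ∩ W = ∅ := by
    intro m
    induction m with
    | zero => exact ⟨E, hEo, hEne, subset_rfl, fun r h1 h2 => absurd h2 (by omega)⟩
    | succ m ih =>
      obtain ⟨W, hWo, hWne, hWE, hWr⟩ := ih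
      obtain ⟨W', h1, h2, h3, h4⟩ := aux_stage f n hn E hE W hWo hWne hWE (m : ℤ)
      refine ⟨W', h1, h2, h3.trans hWE, ?_⟩
      intro r hr0 hrm k hk hkr
      rcases (by omega : r < (m : ℤ) ∨ r = (m : ℤ)) with hlt | heq
      · exact Set.subset_eq_empty
          (Set.inter_subset_inter (iterZ_mono f k h3) h3) (hWr r hr0 hlt k hk hkr)
      · exact h4 k hk (heq ▸ hkr)
  obtain ⟨W, hWo, hWne, hWE, h⟩ := key n
  refine ⟨W, hWo, hWne, hWE, fun k hk => ?_⟩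
  have hnz : (n : ℤ) ≠ 0 := by exact_mod_cast Nat.one_le_iff_ne_zero.mp hn
  exact h (k % (n : ℤ)) (Int.emod_nonneg k hnz)
    (Int.emod_lt_of_pos k (by exact_mod_cast hn)) k hk rfl

end Comb


/-- If there is a compact `K ⊆ U` such that `U ∖ K` contains neither the
forward nor the backward orbit of any `f`-wandering open set, then `f` is ∂-nonwandering
in `U`. -/
theorem bd_nonwandering_of_no_wandering_open_orbit
    {X : Type*} [TopologicalSpace X] [T2Space X] [ConnectedSpace X]
    [ChartedSpace (EuclideanSpace ℝ (Fin 2)) X]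
    (f : X ≃ₜ X) (U : Set X) (hUopen : IsOpen U) (hUsc : SimplyConnectedSpace ↥U)
    (hUinv : ⇑f '' U = U) (hUcompl : Set.Nontrivial Uᶜ)
    (K : Set X) (hK : IsCompact K) (hKU : K ⊆ U)
    (hfwd : ¬∃ W : Set X, IsOpen W ∧ W.Nonempty ∧
      (∀ k : ℤ, k ≠ 0 → iterZ f k W ∩ W = ∅) ∧ ∀ k : ℤ, 0 ≤ k → iterZ f k W ⊆ U \ K)
    (hbwd : ¬∃ W : Set X, IsOpen W ∧ W.Nonempty ∧
      (∀ k : ℤ, k ≠ 0 → iterZ f k W ∩ W = ∅) ∧ ∀ k : ℤ, k ≤ 0 → iterZ f k W ⊆ U \ K) :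
    BdNonwandering f U := by
  haveI : LocallyConnectedSpace X := ChartedSpace.locallyConnectedSpace (EuclideanSpace ℝ (Fin 2)) X
  intro n hn
  have hnz : ((n : ℤ)) ≠ 0 := by exact_mod_cast Nat.one_le_iff_ne_zero.mp hn
  have hnpos : (0 : ℤ) < (n : ℤ) := by exact_mod_cast hn
  have hUk : ∀ k : ℤ, iterZ f k U = U := aux_inv f U hUinv
  set Kn : Set X := ⋃ j ∈ Finset.Icc (-(n : ℤ) + 1) ((n : ℤ) - 1), iterZ f j K with hKndef
  have hKnc : IsCompact Kn := (Finset.Icc (-(n : ℤ) + 1) ((n : ℤ) - 1)).isCompact_biUnion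
    (fun j _ => iterZ_isCompact f j hK)
  have hKnU : Kn ⊆ U := Set.iUnion₂_subset fun j _ =>
    (iterZ_mono f j hKU).trans (le_of_eq (hUk j))
  refine ⟨Kn, hKnc, hKnU, ?_⟩
  intro D hD
  obtain ⟨⟨γ, hγ, hcmp⟩, hw⟩ := hD
  obtain ⟨x, hx, hxD⟩ := hcmp
  obtain ⟨g, hgc, hginj, hgU, hg0, hg1, hγeq, -⟩ := hγ
  -- `U \ γ` is open
  have himg : IsCompact (g '' Set.Icc (0 : ℝ) 1) := isCompact_Icc.image_of_continuousOn hgc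
  have hfr0 : g 0 ∉ U := fun h => hg0.2 (by rwa [hUopen.interior_eq])
  have hfr1 : g 1 ∉ U := fun h => hg1.2 (by rwa [hUopen.interior_eq])
  have hUγ : U \ γ = U \ g '' Set.Icc (0 : ℝ) 1 := by
    rw [hγeq]
    ext y
    simp only [Set.mem_diff]
    constructor
    · rintro ⟨hyU, hyγ⟩
      refine ⟨hyU, ?_⟩
      rintro ⟨t, ht, rfl⟩
      rcases eq_or_lt_of_le ht.1 with h0 | h0
      · exact hfr0 (by rwa [← h0] at hyU)
      rcases eq_or_lt_of_le ht.2 with h1 | h1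
      · exact hfr1 (by rwa [h1] at hyU)
      exact hyγ ⟨t, ⟨h0, h1⟩, rfl⟩
    · rintro ⟨hyU, h⟩
      exact ⟨hyU, fun hy => h ((Set.image_mono Set.Ioo_subset_Icc_self) hy)⟩
  have hopenUγ : IsOpen (U \ γ) := by
    rw [hUγ]; exact hUopen.sdiff himg.isClosed
  have hDo : IsOpen D := hxD ▸ hopenUγ.connectedComponentIn
  have hDne : D.Nonempty := ⟨x, hxD ▸ mem_connectedComponentIn hx⟩
  have hDU : D ⊆ U := hxD ▸ (connectedComponentIn_subset _ _).trans Set.diff_subset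
  -- wandering transfer to translates of D
  have hwand : ∀ c : ℤ, ∀ k : ℤ, k ≠ 0 →
      iterZ f ((n : ℤ) * k) (iterZ f c D) ∩ iterZ f c D = ∅ := by
    intro c k hk
    calc iterZ f ((n : ℤ) * k) (iterZ f c D) ∩ iterZ f c D
        = iterZ f c (iterZ f ((n : ℤ) * k) D) ∩ iterZ f c D := by
          rw [iterZ_add, iterZ_add, add_comm]
      _ = iterZ f c (iterZ f ((n : ℤ) * k) D ∩ D) := (iterZ_inter f c _ _).symm
      _ = ∅ := by rw [hw k hk]; exact iterZ_empty f c
  constructor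
  · -- positive direction
    by_contra hpos
    push_neg at hpos
    have hKmiss : ∀ q : ℤ, 0 < q → iterZ f ((n : ℤ) * q) D ∩ Kn = ∅ := fun q hq => hpos q hq
    have hmK : ∀ m : ℤ, 1 ≤ m → iterZ f m D ∩ K = ∅ := by
      intro m hm
      by_contra hc
      replace hc : (iterZ f m D ∩ K).Nonempty := Set.nonempty_iff_ne_empty.mpr hc
      obtain ⟨q, j, hq, hj1, hj2, hmqj⟩ :
          ∃ q j : ℤ, 0 < q ∧ -(n : ℤ) + 1 ≤ j ∧ j ≤ (n : ℤ) - 1 ∧ m = (n : ℤ) * q + j := by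
        have he := Int.mul_ediv_add_emod m (n : ℤ)
        have h0 : 0 ≤ m % (n : ℤ) := Int.emod_nonneg m hnz
        have h1 : m % (n : ℤ) < (n : ℤ) := Int.emod_lt_of_pos m hnpos
        rcases le_or_gt 1 (m / (n : ℤ)) with hq1 | hq1
        · exact ⟨m / (n : ℤ), m % (n : ℤ), hq1, by omega, by omega, by omega⟩
        · have hq0 : 0 ≤ m / (n : ℤ) := Int.ediv_nonneg (by omega) (by omega)
          have hq00 : m / (n : ℤ) = 0 := by omega
          rw [hq00, mul_zero, zero_add] at he
          exact ⟨1, m - (n : ℤ), one_pos, by omega, by omega, by ring⟩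
      have h2 : (iterZ f (-j + m) D ∩ iterZ f (-j) K).Nonempty := aux_shift f (-j) m D K hc
      have e1 : -j + m = (n : ℤ) * q := by omega
      rw [e1] at h2
      have h3 : iterZ f (-j) K ⊆ Kn := by
        rw [hKndef]
        have hmem : -j ∈ Finset.Icc (-(n : ℤ) + 1) ((n : ℤ) - 1) :=
          Finset.mem_Icc.mpr ⟨by omega, by omega⟩
        intro y hy
        exact Set.mem_biUnion hmem hy
      have h4 := h2.mono (Set.inter_subset_inter subset_rfl h3)
      rw [hKmiss q hq] at h4
      exact Set.not_nonempty_empty h4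
    obtain ⟨W₀, hW₀o, hW₀ne, hW₀sub, hW₀w⟩ := aux_main f n hn (iterZ f 1 D)
      (iterZ_isOpen f 1 hDo) (iterZ_nonempty f 1 hDne) (hwand 1)
    refine absurd ?_ hfwd
    refine ⟨W₀, hW₀o, hW₀ne, hW₀w, ?_⟩
    intro k hk
    have hsub : iterZ f k W₀ ⊆ iterZ f (k + 1) D :=
      (iterZ_mono f k hW₀sub).trans (le_of_eq (iterZ_add f k 1 D))
    refine Set.subset_diff.mpr ⟨hsub.trans ?_, ?_⟩
    · exact (iterZ_mono f (k + 1) hDU).trans (le_of_eq (hUk (k + 1)))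
    · refine Disjoint.mono_left hsub ?_
      exact Set.disjoint_iff_inter_eq_empty.mpr (hmK (k + 1) (by omega))
  · -- negative direction
    by_contra hneg
    push_neg at hneg
    have hKmiss : ∀ q : ℤ, q < 0 → iterZ f ((n : ℤ) * q) D ∩ Kn = ∅ := fun q hq => hneg q hq
    have hmK : ∀ m : ℤ, m ≤ -1 → iterZ f m D ∩ K = ∅ := by
      intro m hm
      by_contra hc
      replace hc : (iterZ f m D ∩ K).Nonempty := Set.nonempty_iff_ne_empty.mpr hc
      obtain ⟨q, j, hq, hj1, hj2, hmqj⟩ :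
          ∃ q j : ℤ, q < 0 ∧ -(n : ℤ) + 1 ≤ j ∧ j ≤ (n : ℤ) - 1 ∧ m = (n : ℤ) * q + j := by
        have he := Int.mul_ediv_add_emod m (n : ℤ)
        have h0 : 0 ≤ m % (n : ℤ) := Int.emod_nonneg m hnz
        have h1 : m % (n : ℤ) < (n : ℤ) := Int.emod_lt_of_pos m hnpos
        refine ⟨m / (n : ℤ), m % (n : ℤ), ?_, by omega, by omega, by omega⟩
        by_contra hq'
        push_neg at hq'
        have : 0 ≤ (n : ℤ) * (m / (n : ℤ)) := mul_nonneg (by omega) hq'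
        omega
      have h2 : (iterZ f (-j + m) D ∩ iterZ f (-j) K).Nonempty := aux_shift f (-j) m D K hc
      have e1 : -j + m = (n : ℤ) * q := by omega
      rw [e1] at h2
      have h3 : iterZ f (-j) K ⊆ Kn := by
        rw [hKndef]
        have hmem : -j ∈ Finset.Icc (-(n : ℤ) + 1) ((n : ℤ) - 1) :=
          Finset.mem_Icc.mpr ⟨by omega, by omega⟩
        intro y hy
        exact Set.mem_biUnion hmem hy
      have h4 := h2.mono (Set.inter_subset_inter subset_rfl h3)
      rw [hKmiss q hq] at h4
      exact Set.not_nonempty_empty h4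
    obtain ⟨W₀, hW₀o, hW₀ne, hW₀sub, hW₀w⟩ := aux_main f n hn (iterZ f (-1) D)
      (iterZ_isOpen f (-1) hDo) (iterZ_nonempty f (-1) hDne) (hwand (-1))
    refine absurd ?_ hbwd
    refine ⟨W₀, hW₀o, hW₀ne, hW₀w, ?_⟩
    intro k hk
    have hsub : iterZ f k W₀ ⊆ iterZ f (k + -1) D :=
      (iterZ_mono f k hW₀sub).trans (le_of_eq (iterZ_add f k (-1) D))
    refine Set.subset_diff.mpr ⟨hsub.trans ?_, ?_⟩
    · exact (iterZ_mono f (k + -1) hDU).trans (le_of_eq (hUk (k + -1)))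
    · refine Disjoint.mono_left hsub ?_
      exact Set.disjoint_iff_inter_eq_empty.mpr (hmK (k + -1) (by omega))

end
end

section
/- Let S be a surface (a connected Hausdorff topological 2-manifold), f : S → S a homeomorphism, and U ⊆ S an open simply connected f-invariant set with S∖U having more than one point. Suppose there exist a compact set K ⊆ U and an f-invariant Borel measure μ on S (not necessarily finite) such that μ(U∖K) < ∞ and μ(D) > 0 for every cross-section D of U in S. Then f is ∂-nonwandering in U. -/
open Set Topology Filter

noncomputable section

universe u

variable {X : Type u} [TopologicalSpace X]

/-- If there are a compact `K ⊆ U` and an `f`-invariant Borel measure `μ`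
with `μ(U ∖ K) < ∞` giving positive measure to every cross-section of `U`, then `f` is
∂-nonwandering in `U`. -/
theorem bd_nonwandering_of_finite_invariant_measure
    {X : Type*} [TopologicalSpace X] [T2Space X] [ConnectedSpace X]
    [ChartedSpace (EuclideanSpace ℝ (Fin 2)) X] [MeasurableSpace X] [BorelSpace X]
    (f : X ≃ₜ X) (U : Set X) (hUopen : IsOpen U) (hUsc : SimplyConnectedSpace ↥U)
    (hUinv : ⇑f '' U = U) (hUcompl : Set.Nontrivial Uᶜ)
    (K : Set X) (hK : IsCompact K) (hKU : K ⊆ U)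
    (μ : MeasureTheory.Measure X)
    (hinv : ∀ A : Set X, MeasurableSet A → μ (⇑f ⁻¹' A) = μ A)
    (hfin : μ (U \ K) < ⊤)
    (hpos : ∀ D : Set X, IsCrossSection U D → 0 < μ D) :
    BdNonwandering f U := by
  haveI : LocallyConnectedSpace X :=
    ChartedSpace.locallyConnectedSpace (EuclideanSpace ℝ (Fin 2)) X
  -- invariance of `μ` under `f.symm`
  have hsymm : ∀ A : Set X, MeasurableSet A → μ (⇑f.symm ⁻¹' A) = μ A := by
    intro A hA
    have h1 : MeasurableSet (⇑f.symm ⁻¹' A) := f.symm.continuous.measurable hA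
    have h2 := hinv _ h1
    have h3 : ⇑f ⁻¹' (⇑f.symm ⁻¹' A) = A := by ext x; simp
    rw [h3] at h2
    exact h2.symm
  have hUsymm : ⇑f.symm '' U = U := by
    conv_lhs => rw [← hUinv]
    exact f.toEquiv.symm_image_image U
  -- master lemma on integer powers of `f.toEquiv`
  have master : ∀ m : ℤ, Continuous ⇑(f.toEquiv ^ m) ∧
      (∀ A : Set X, MeasurableSet A → μ (⇑(f.toEquiv ^ m) ⁻¹' A) = μ A) ∧
      ⇑(f.toEquiv ^ m) '' U = U := by
    intro m
    induction m using Int.induction_on with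
    | zero =>
      have h : ⇑(f.toEquiv ^ (0 : ℤ)) = id := by rw [zpow_zero]; rfl
      exact ⟨h ▸ continuous_id, fun A hA => by rw [h, Set.preimage_id],
        by rw [h, Set.image_id]⟩
    | succ i ih =>
      have hco : ⇑(f.toEquiv ^ ((i : ℤ) + 1)) = ⇑(f.toEquiv ^ (i : ℤ)) ∘ ⇑f := by
        rw [zpow_add_one]; rfl
      refine ⟨?_, ?_, ?_⟩
      · rw [hco]; exact ih.1.comp f.continuous
      · intro A hA
        rw [hco, Set.preimage_comp]
        have hA' : MeasurableSet (⇑(f.toEquiv ^ (i : ℤ)) ⁻¹' A) := ih.1.measurable hA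
        rw [hinv _ hA', ih.2.1 A hA]
      · rw [hco, Set.image_comp]
        rw [show ⇑f '' U = U from hUinv, ih.2.2]
    | pred i ih =>
      have hco : ⇑(f.toEquiv ^ (-(i : ℤ) - 1)) = ⇑(f.toEquiv ^ (-(i : ℤ))) ∘ ⇑f.symm := by
        rw [zpow_sub_one]; rfl
      refine ⟨?_, ?_, ?_⟩
      · rw [hco]; exact ih.1.comp f.symm.continuous
      · intro A hA
        rw [hco, Set.preimage_comp]
        have hA' : MeasurableSet (⇑(f.toEquiv ^ (-(i : ℤ))) ⁻¹' A) := ih.1.measurable hA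
        rw [hsymm _ hA', ih.2.1 A hA]
      · rw [hco, Set.image_comp, hUsymm, ih.2.2]
  have himg : ∀ (m : ℤ) (S : Set X), ⇑(f.toEquiv ^ m) '' S = ⇑(f.toEquiv ^ (-m)) ⁻¹' S := by
    intro m S
    rw [Equiv.image_eq_preimage_symm]
    congr 1
    rw [zpow_neg]; rfl
  intro n hn
  refine ⟨K, hK, hKU, ?_⟩
  intro D hD
  obtain ⟨hDsec, hwand⟩ := hD
  -- `D` is open
  obtain ⟨γ, hγcut, xD, hxD, hDeq⟩ := hDsec
  have hDopen : IsOpen D := by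
    obtain ⟨g, hgc, -, hgU, hg0, hg1, hγeq, -⟩ := hγcut
    have hIm : IsCompact (g '' Icc 0 1) := isCompact_Icc.image_of_continuousOn hgc
    have hclγ : closure γ ⊆ g '' Icc 0 1 := by
      apply closure_minimal _ hIm.isClosed
      rw [hγeq]; exact Set.image_mono (f := g) Ioo_subset_Icc_self
    have hsub : closure γ ∩ U ⊆ γ := by
      rintro z ⟨hz1, hz2⟩
      obtain ⟨t, ht, rfl⟩ := hclγ hz1
      rcases eq_or_lt_of_le ht.1 with h0 | h0
      · exfalso
        rw [← h0] at hz2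
        rw [hUopen.frontier_eq] at hg0
        exact hg0.2 hz2
      rcases eq_or_lt_of_le ht.2 with h1 | h1
      · exfalso
        rw [h1] at hz2
        rw [hUopen.frontier_eq] at hg1
        exact hg1.2 hz2
      · rw [hγeq]; exact ⟨t, ⟨h0, h1⟩, rfl⟩
    have hUγ : U \ γ = U ∩ (closure γ)ᶜ := by
      ext z
      constructor
      · rintro ⟨hzU, hzγ⟩
        exact ⟨hzU, fun hc => hzγ (hsub ⟨hc, hzU⟩)⟩
      · rintro ⟨hzU, hzc⟩
        exact ⟨hzU, fun hc => hzc (subset_closure hc)⟩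
    have hopen : IsOpen (U \ γ) := by
      rw [hUγ]; exact hUopen.inter isClosed_closure.isOpen_compl
    rw [hDeq]
    exact hopen.connectedComponentIn
  have hDU : D ⊆ U := by
    rw [hDeq]
    exact (connectedComponentIn_subset _ _).trans Set.diff_subset
  have hDpos : 0 < μ D := hpos D ⟨γ, hγcut, xD, hxD, hDeq⟩
  -- facts about images of `D`
  have hopenimg : ∀ m : ℤ, IsOpen (⇑(f.toEquiv ^ m) '' D) := by
    intro m
    rw [himg]
    exact hDopen.preimage (master (-m)).1
  have hmuimg : ∀ m : ℤ, μ (⇑(f.toEquiv ^ m) '' D) = μ D := by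
    intro m
    rw [himg]
    exact (master (-m)).2.1 D hDopen.measurableSet
  have hsubU : ∀ m : ℤ, ⇑(f.toEquiv ^ m) '' D ⊆ U := by
    intro m
    rw [← (master m).2.2]
    exact Set.image_mono hDU
  -- iterates are pairwise disjoint
  have hdisj : ∀ a b : ℤ, a ≠ b →
      ⇑(f.toEquiv ^ ((n : ℤ) * a)) '' D ∩ ⇑(f.toEquiv ^ ((n : ℤ) * b)) '' D = ∅ := by
    intro a b hab
    have hsplit : f.toEquiv ^ ((n : ℤ) * a)
        = f.toEquiv ^ ((n : ℤ) * b) * f.toEquiv ^ ((n : ℤ) * (a - b)) := by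
      rw [← zpow_add]; congr 1; ring
    have h1 : ⇑(f.toEquiv ^ ((n : ℤ) * a)) '' D
        = ⇑(f.toEquiv ^ ((n : ℤ) * b)) '' (⇑(f.toEquiv ^ ((n : ℤ) * (a - b))) '' D) := by
      rw [hsplit, ← Set.image_comp]; rfl
    have h2 := hwand (a - b) (sub_ne_zero.mpr hab)
    simp only [iterZ] at h2
    rw [h1, ← Set.image_inter (f.toEquiv ^ ((n : ℤ) * b)).injective, h2, Set.image_empty]
  -- main counting argument
  have main : ∀ σ : ℕ → ℤ, Function.Injective σ →
      ∃ i, (iterZ f ((n : ℤ) * σ i) D ∩ K).Nonempty := by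
    intro σ hσinj
    by_contra hcon
    push_neg at hcon
    set G : ℕ → Set X := fun i => ⇑(f.toEquiv ^ ((n : ℤ) * σ i)) '' D with hG
    have hGK : ∀ i, G i ∩ K = ∅ := fun i => hcon i
    have hGsub : ∀ i, G i ⊆ U \ K := by
      intro i z hz
      refine ⟨hsubU _ hz, fun hzK => ?_⟩
      have : z ∈ G i ∩ K := ⟨hz, hzK⟩
      rw [hGK i] at this
      exact this
    have hGdisj : Pairwise (Function.onFun Disjoint G) := by
      intro a b hab
      rw [Function.onFun, Set.disjoint_iff_inter_eq_empty]
      exact hdisj (σ a) (σ b) (fun h => hab (hσinj h))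
    have hGmeas : ∀ i, MeasurableSet (G i) := fun i => (hopenimg _).measurableSet
    have hcount : μ (⋃ i, G i) = ⊤ := by
      rw [MeasureTheory.measure_iUnion hGdisj hGmeas]
      have : ∀ i, μ (G i) = μ D := fun i => hmuimg _
      simp_rw [this]
      exact ENNReal.tsum_const_eq_top_of_ne_zero hDpos.ne'
    have hle : μ (⋃ i, G i) ≤ μ (U \ K) :=
      MeasureTheory.measure_mono (Set.iUnion_subset hGsub)
    rw [hcount] at hle
    exact absurd (lt_of_le_of_lt hle hfin) (lt_irrefl ⊤)
  constructor
  · obtain ⟨i, hi⟩ := main (fun i => (i : ℤ) + 1) (by intro a b h; simpa using h)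
    exact ⟨(i : ℤ) + 1, by positivity, hi⟩
  · obtain ⟨i, hi⟩ := main (fun i => -(i : ℤ) - 1) (by intro a b h; simpa using h)
    refine ⟨-(i : ℤ) - 1, by omega, hi⟩

end
end
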